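/- For all λ > 0, γ ≥ 0 and β > 0, ∫₀^∞ e^{−γh²} · (1/(βh²))(1 − e^{−βh²}) · 4πλ^{3/2} h² e^{−λπh²} dh = (2λπ/β) [ (1 + γ/(λπ))^{−1/2} − (1 + (γ+β)/(λπ))^{−1/2} ]. Equivalently, if H has Nakagami(3/2, 3/(2λπ)) density 4πλ^{3/2}h²e^{−λπh²} and, conditionally on H = h, R² is uniformly distributed on [0, h²], then E[e^{−γH² − βR²}] equals the right-hand side. -/

import Mathlib

open MeasureTheory Set

/-- Joint Laplace transform of `(H_I², R_I²)` at a typical max-interference epoch: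
if `H` has Nakagami(3/2, 3/(2λπ)) density `4πλ^{3/2}h²e^{−λπh²}` and, given `H = h`,
`R²` is uniform on `[0,h²]`, then
`∫₀^∞ e^{−γh²} (1/(βh²))(1 − e^{−βh²}) · 4πλ^{3/2} h² e^{−λπh²} dh
  = (2λπ/β)[(1 + γ/(λπ))^{−1/2} − (1 + (γ+β)/(λπ))^{−1/2}]`. -/
theorem stmt_10 (lam γ β : ℝ) (hlam : 0 < lam) (hγ : 0 ≤ γ) (hβ : 0 < β) :
    (∫ h in Ioi (0:ℝ),
        Real.exp (-(γ * h ^ 2)) * (1 / (β * h ^ 2) * (1 - Real.exp (-(β * h ^ 2)))) *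
          (4 * Real.pi * lam ^ ((3:ℝ)/2) * h ^ 2 * Real.exp (-(lam * Real.pi * h ^ 2)))) =
      2 * lam * Real.pi / β *
        ((1 + γ / (lam * Real.pi)) ^ (-(1:ℝ)/2) -
          (1 + (γ + β) / (lam * Real.pi)) ^ (-(1:ℝ)/2)) := by
  have hpi := Real.pi_pos
  set pl := lam * Real.pi with hpl
  have hplpos : 0 < pl := mul_pos hlam hpi
  set a := γ + pl with ha
  set b := γ + β + pl with hb
  have hapos : 0 < a := by positivity
  have hbpos : 0 < b := by positivity
  set c := 4 * Real.pi * lam ^ ((3:ℝ)/2) / β with hc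
  -- rewrite the integrand
  have hcongr : ∀ h ∈ Ioi (0:ℝ),
      Real.exp (-(γ * h ^ 2)) * (1 / (β * h ^ 2) * (1 - Real.exp (-(β * h ^ 2)))) *
          (4 * Real.pi * lam ^ ((3:ℝ)/2) * h ^ 2 * Real.exp (-(lam * Real.pi * h ^ 2)))
        = c * Real.exp (-a * h ^ 2) - c * Real.exp (-b * h ^ 2) := by
    intro h hh
    have hh0 : (0:ℝ) < h := hh
    have hh2 : h ^ 2 ≠ 0 := by positivity
    have e1 : Real.exp (-a * h ^ 2)
        = Real.exp (-(γ * h ^ 2)) * Real.exp (-(lam * Real.pi * h ^ 2)) := by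
      rw [← Real.exp_add, ha, hpl]; congr 1; ring
    have e2 : Real.exp (-b * h ^ 2)
        = Real.exp (-(γ * h ^ 2)) * Real.exp (-(lam * Real.pi * h ^ 2))
            * Real.exp (-(β * h ^ 2)) := by
      rw [← Real.exp_add, ← Real.exp_add, hb, hpl]; congr 1; ring
    rw [e1, e2, hc]
    field_simp
  rw [setIntegral_congr_fun measurableSet_Ioi hcongr]
  have hia : IntegrableOn (fun h : ℝ => c * Real.exp (-a * h ^ 2)) (Ioi 0) :=
    ((integrable_exp_neg_mul_sq hapos).const_mul c).integrableOn
  have hib : IntegrableOn (fun h : ℝ => c * Real.exp (-b * h ^ 2)) (Ioi 0) :=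
    ((integrable_exp_neg_mul_sq hbpos).const_mul c).integrableOn
  rw [integral_sub hia hib, integral_const_mul, integral_const_mul,
    integral_gaussian_Ioi, integral_gaussian_Ioi]
  -- now pure algebra with square roots
  have hrpow : ∀ x : ℝ, 0 < x → x ^ (-(1:ℝ)/2) = (Real.sqrt x)⁻¹ := by
    intro x hx
    rw [show (-(1:ℝ)/2) = -(1/2) by ring, Real.rpow_neg hx.le, ← Real.sqrt_eq_rpow]
  have h1 : 1 + γ / pl = a / pl := by field_simp [ha]; ring
  have h2 : 1 + (γ + β) / pl = b / pl := by field_simp [hb]; ring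
  rw [h1, h2, hrpow _ (div_pos hapos hplpos), hrpow _ (div_pos hbpos hplpos),
    Real.sqrt_div hapos.le, Real.sqrt_div hbpos.le,
    Real.sqrt_div hpi.le a, Real.sqrt_div hpi.le b]
  have hlam32 : lam ^ ((3:ℝ)/2) = lam * Real.sqrt lam := by
    rw [show (3:ℝ)/2 = 1 + 1/2 by ring, Real.rpow_add hlam, Real.rpow_one,
      ← Real.sqrt_eq_rpow]
  have hsqrtpl : Real.sqrt pl = Real.sqrt lam * Real.sqrt Real.pi := by
    rw [hpl, Real.sqrt_mul hlam.le]
  have hsa : Real.sqrt a ≠ 0 := by positivity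
  have hsb : Real.sqrt b ≠ 0 := by positivity
  have hspl : Real.sqrt pl ≠ 0 := by positivity
  have hspi : Real.sqrt Real.pi ≠ 0 := by positivity
  have hslam : Real.sqrt lam ≠ 0 := by positivity
  have hpi2 : Real.sqrt Real.pi * Real.sqrt Real.pi = Real.pi :=
    Real.mul_self_sqrt hpi.le
  rw [hc, hlam32, hsqrtpl]
  field_simp
  ring_nf
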